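/- Let m ≥ 2, τ ∈ S_m, and suppose that the ratios |S_{n+1}(τ)|/|S_n(τ)| converge as n → ∞ to a limit L > 0. Fix l ≥ 2 and let {k_n} be any sequence with 1 ≤ k_n ≤ n-l+1. If τ does not contain tightly at least one of the patterns 12 and 21, then liminf_{n→∞} |A^{(n)}_{l;k_n} ∩ S_n(τ)| / |S_n(τ)| ≥ 1/L^{l-1}. If τ contains tightly neither 12 nor 21, then liminf_{n→∞} |A^{(n)}_{l;k_n} ∩ S_n(τ)| / |S_n(τ)| ≥ 2/L^{l-1}. -/
import Mathlib

open Filter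

def Contains {n m : ℕ} (σ : Fin n → Fin n) (τ : Fin m → Fin m) : Prop :=
  ∃ f : Fin m → Fin n, StrictMono f ∧ ∀ j k : Fin m, σ (f j) < σ (f k) ↔ τ j < τ k

def Avoids {n m : ℕ} (σ : Fin n → Fin n) (τ : Fin m → Fin m) : Prop :=
  ¬ Contains σ τ

def AvoidSet (n : ℕ) {m : ℕ} (τ : Equiv.Perm (Fin m)) : Set (Equiv.Perm (Fin n)) :=
  {σ : Equiv.Perm (Fin n) | Avoids ⇑σ ⇑τ}

def ClusterAt {n : ℕ} (l k a : ℕ) (σ : Equiv.Perm (Fin n)) : Prop :=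
  (Finset.univ.filter fun i : Fin n => a ≤ (i : ℕ) + 1 ∧ (i : ℕ) + 1 < a + l).image
      (fun i => (σ i : ℕ) + 1) = Finset.Ico k (k + l)

def ClusterEvent (n l k : ℕ) : Set (Equiv.Perm (Fin n)) :=
  {σ : Equiv.Perm (Fin n) | ∃ a : ℕ, 1 ≤ a ∧ a ≤ n - l + 1 ∧ ClusterAt l k a σ}

def ClusterFree {m : ℕ} (τ : Equiv.Perm (Fin m)) : Prop :=
  ∀ l a k : ℕ, 2 ≤ l → l ≤ m - 1 → 1 ≤ a → a + l ≤ m + 1 → ¬ ClusterAt l k a τ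

def ContainsTightly12 {m : ℕ} (τ : Equiv.Perm (Fin m)) : Prop :=
  ∃ i j : Fin m, (j : ℕ) = (i : ℕ) + 1 ∧ (τ j : ℕ) = (τ i : ℕ) + 1

def ContainsTightly21 {m : ℕ} (τ : Equiv.Perm (Fin m)) : Prop :=
  ∃ i j : Fin m, (j : ℕ) = (i : ℕ) + 1 ∧ (τ i : ℕ) = (τ j : ℕ) + 1

def perm123 : Equiv.Perm (Fin 3) := Equiv.refl (Fin 3)

def perm321 : Equiv.Perm (Fin 3) :=
  ⟨![2, 1, 0], ![2, 1, 0], by intro x; fin_cases x <;> rfl, by intro x; fin_cases x <;> rfl⟩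

def p2413 : Equiv.Perm (Fin 4) :=
  ⟨![1, 3, 0, 2], ![2, 0, 3, 1], by intro x; fin_cases x <;> rfl, by intro x; fin_cases x <;> rfl⟩

def p3142 : Equiv.Perm (Fin 4) :=
  ⟨![2, 0, 3, 1], ![1, 3, 0, 2], by intro x; fin_cases x <;> rfl, by intro x; fin_cases x <;> rfl⟩

def SepSet (n : ℕ) : Set (Equiv.Perm (Fin n)) :=
  {σ : Equiv.Perm (Fin n) | Avoids ⇑σ ⇑p2413 ∧ Avoids ⇑σ ⇑p3142}



namespace ACL

/-- value lift: values `< v0` stay, values `≥ v0` shift up by `d`. -/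
def vlift (v0 d y : ℕ) : ℕ := if y < v0 then y else y + d

/-- run value at offset `t` (0 ≤ t ≤ d): increasing or decreasing run of the
values `v0, …, v0+d`. -/
def runv (v0 d : ℕ) (inc : Bool) (t : ℕ) : ℕ := if inc then v0 + t else v0 + d - t

/-- The inflation of a permutation (given by `s : ℕ → ℕ`) at position `p`
(which is assumed to carry value `v0`): positions `p, …, p+d` carry a run of the
values `v0, …, v0+d`. -/
def inflNat (p v0 d : ℕ) (inc : Bool) (s : ℕ → ℕ) (x : ℕ) : ℕ :=
  if x < p then vlift v0 d (s x)
  else if x ≤ p + d then runv v0 d inc (x - p)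
  else vlift v0 d (s (x - d))

lemma inflNat_lt {N d v0 p : ℕ} (hp : p < N) (hv : v0 + 1 ≤ N) (inc : Bool)
    (s : ℕ → ℕ) (hs : ∀ y, y < N → s y < N) (x : ℕ) (hx : x < N + d) :
    inflNat p v0 d inc s x < N + d := by
  have h1 : x - d < N := by omega
  have h2 := hs (x - d) h1
  rcases lt_or_ge x p with hxp | hxp
  · have := hs x (by omega)
    unfold inflNat vlift runv; split_ifs <;> omega
  · unfold inflNat vlift runv; split_ifs <;> omega

end ACL

namespace ACL2
open ACL

lemma vlift_eq_iff {v0 d a b : ℕ} (h : vlift v0 d a = vlift v0 d b) : a = b := by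
  unfold vlift at h; split_ifs at h <;> omega

lemma vlift_notin {v0 d y : ℕ} (hy : y ≠ v0) : vlift v0 d y < v0 ∨ v0 + d < vlift v0 d y := by
  unfold vlift; split_ifs <;> omega

lemma runv_mem {v0 d : ℕ} (inc : Bool) {t : ℕ} (ht : t ≤ d) :
    v0 ≤ runv v0 d inc t ∧ runv v0 d inc t ≤ v0 + d := by
  cases inc <;> simp [runv] <;> omega

lemma runv_inj {v0 d : ℕ} (inc : Bool) {t t' : ℕ} (ht : t ≤ d) (ht' : t' ≤ d)
    (h : runv v0 d inc t = runv v0 d inc t') : t = t' := by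
  cases inc <;> simp [runv] at h <;> omega

lemma inflNat_lo {p v0 d : ℕ} (inc : Bool) (s : ℕ → ℕ) {x : ℕ} (h : x < p) :
    inflNat p v0 d inc s x = vlift v0 d (s x) := if_pos h

lemma inflNat_mid {p v0 d : ℕ} (inc : Bool) (s : ℕ → ℕ) {x : ℕ} (h1 : p ≤ x) (h2 : x ≤ p + d) :
    inflNat p v0 d inc s x = runv v0 d inc (x - p) := by
  unfold inflNat; rw [if_neg (by omega), if_pos h2]

lemma inflNat_hi {p v0 d : ℕ} (inc : Bool) (s : ℕ → ℕ) {x : ℕ} (h : p + d < x) :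
    inflNat p v0 d inc s x = vlift v0 d (s (x - d)) := by
  unfold inflNat; rw [if_neg (by omega), if_neg (by omega)]

lemma inflNat_inj {N d v0 p : ℕ} (hp : p < N) (hv : v0 + 1 ≤ N) (inc : Bool) (s : ℕ → ℕ)
    (hs : ∀ y, y < N → s y < N) (hinj : ∀ y z, y < N → z < N → s y = s z → y = z)
    (hsp : s p = v0) {x y : ℕ} (hx : x < N + d) (hy : y < N + d)
    (h : inflNat p v0 d inc s x = inflNat p v0 d inc s y) : x = y := by
  have hne : ∀ z, z < N → z ≠ p → s z ≠ v0 := fun z hz hzp hsv =>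
    hzp (hinj z p hz hp (by rw [hsv, hsp]))
  have hx3 : x < p ∨ (p ≤ x ∧ x ≤ p + d) ∨ (p + d < x) := by omega
  have hy3 : y < p ∨ (p ≤ y ∧ y ≤ p + d) ∨ (p + d < y) := by omega
  rcases hx3 with hx1 | ⟨hx1, hx2⟩ | hx1 <;> rcases hy3 with hy1 | ⟨hy1, hy2⟩ | hy1
  · rw [inflNat_lo inc s hx1, inflNat_lo inc s hy1] at h
    exact hinj x y (by omega) (by omega) (vlift_eq_iff h)
  · rw [inflNat_lo inc s hx1, inflNat_mid inc s hy1 hy2] at h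
    have h1 := vlift_notin (d := d) (hne x (by omega) (by omega))
    have h2 := runv_mem (v0 := v0) (d := d) inc (t := y - p) (by omega)
    omega
  · rw [inflNat_lo inc s hx1, inflNat_hi inc s hy1] at h
    have := hinj x (y - d) (by omega) (by omega) (vlift_eq_iff h)
    omega
  · rw [inflNat_mid inc s hx1 hx2, inflNat_lo inc s hy1] at h
    have h1 := vlift_notin (d := d) (hne y (by omega) (by omega))
    have h2 := runv_mem (v0 := v0) (d := d) inc (t := x - p) (by omega)
    omega
  · rw [inflNat_mid inc s hx1 hx2, inflNat_mid inc s hy1 hy2] at h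
    have := runv_inj (d := d) inc (t := x - p) (t' := y - p) (by omega) (by omega) h
    omega
  · rw [inflNat_mid inc s hx1 hx2, inflNat_hi inc s hy1] at h
    have h1 := vlift_notin (d := d) (hne (y - d) (by omega) (by omega))
    have h2 := runv_mem (v0 := v0) (d := d) inc (t := x - p) (by omega)
    omega
  · rw [inflNat_hi inc s hx1, inflNat_lo inc s hy1] at h
    have := hinj (x - d) y (by omega) (by omega) (vlift_eq_iff h)
    omega
  · rw [inflNat_hi inc s hx1, inflNat_mid inc s hy1 hy2] at h
    have h1 := vlift_notin (d := d) (hne (x - d) (by omega) (by omega))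
    have h2 := runv_mem (v0 := v0) (d := d) inc (t := y - p) (by omega)
    omega
  · rw [inflNat_hi inc s hx1, inflNat_hi inc s hy1] at h
    have := hinj (x - d) (y - d) (by omega) (by omega) (vlift_eq_iff h)
    omega

end ACL2

namespace ACL
section
variable {N d v0 : ℕ}

def sFun (σ : Equiv.Perm (Fin N)) : ℕ → ℕ := fun y => if h : y < N then (σ ⟨y, h⟩ : ℕ) else 0

lemma sFun_lt (σ : Equiv.Perm (Fin N)) : ∀ y, y < N → sFun σ y < N := by
  intro y hy; simp only [sFun, dif_pos hy]; exact (σ ⟨y, hy⟩).isLt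

lemma sFun_inj (σ : Equiv.Perm (Fin N)) : ∀ y z, y < N → z < N → sFun σ y = sFun σ z → y = z := by
  intro y z hy hz h
  simp only [sFun, dif_pos hy, dif_pos hz] at h
  have := σ.injective (Fin.ext h : σ ⟨y, hy⟩ = σ ⟨z, hz⟩)
  exact congrArg Fin.val this

def ppos (hv : v0 + 1 ≤ N) (σ : Equiv.Perm (Fin N)) : ℕ := (σ.symm ⟨v0, by omega⟩ : ℕ)

lemma ppos_lt (hv : v0 + 1 ≤ N) (σ : Equiv.Perm (Fin N)) : ppos hv σ < N := Fin.is_lt _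

lemma sFun_ppos (hv : v0 + 1 ≤ N) (σ : Equiv.Perm (Fin N)) : sFun σ (ppos hv σ) = v0 := by
  simp only [sFun, ppos, dif_pos (ppos_lt hv σ), Fin.eta, Equiv.apply_symm_apply,
    Fin.is_lt, dite_true]

noncomputable def inflPerm (hv : v0 + 1 ≤ N) (inc : Bool) (σ : Equiv.Perm (Fin N)) :
    Equiv.Perm (Fin (N + d)) :=
  Equiv.ofBijective
    (fun x => ⟨inflNat (ppos hv σ) v0 d inc (sFun σ) x,
      inflNat_lt (ppos_lt hv σ) hv inc (sFun σ) (sFun_lt σ) x x.isLt⟩)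
    (Finite.injective_iff_bijective.mp (fun x y h => by
      exact Fin.ext (ACL2.inflNat_inj (ppos_lt hv σ) hv inc (sFun σ) (sFun_lt σ) (sFun_inj σ)
        (sFun_ppos hv σ) x.isLt y.isLt (congrArg Fin.val h))))

lemma inflPerm_apply (hv : v0 + 1 ≤ N) (inc : Bool) (σ : Equiv.Perm (Fin N)) (x : Fin (N + d)) :
    (inflPerm hv inc σ x : ℕ) = inflNat (ppos hv σ) v0 d inc (sFun σ) x := rfl

end
end ACL

namespace ACL
section
variable {N d v0 : ℕ}

lemma inflPerm_cluster (hv : v0 + 1 ≤ N) (inc : Bool) (σ : Equiv.Perm (Fin N)) :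
    ClusterAt (d + 1) (v0 + 1) (ppos hv σ + 1) (inflPerm (d := d) hv inc σ) := by
  have hpN : ppos hv σ < N := ppos_lt hv σ
  unfold ClusterAt
  ext y
  simp only [Finset.mem_image, Finset.mem_filter, Finset.mem_univ, true_and, Finset.mem_Ico]
  constructor
  · rintro ⟨i, ⟨h1, h2⟩, rfl⟩
    have hi1 : ppos hv σ ≤ (i : ℕ) := by omega
    have hi2 : (i : ℕ) ≤ ppos hv σ + d := by omega
    have h3 := inflPerm_apply hv inc σ i
    rw [ACL2.inflNat_mid inc _ hi1 hi2] at h3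
    have h4 := ACL2.runv_mem (v0 := v0) (d := d) inc (t := (i : ℕ) - ppos hv σ) (by omega)
    omega
  · rintro ⟨hy1, hy2⟩
    have htd : (if inc then (y - 1) - v0 else v0 + d - (y - 1)) ≤ d := by
      cases inc <;> simp <;> omega
    refine ⟨⟨ppos hv σ + (if inc then (y - 1) - v0 else v0 + d - (y - 1)), by omega⟩,
      ⟨by simp, by simp; omega⟩, ?_⟩
    have h2 : (inflPerm (d := d) hv inc σ
        ⟨ppos hv σ + (if inc then (y - 1) - v0 else v0 + d - (y - 1)), by omega⟩ : ℕ)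
        = runv v0 d inc (if inc then (y - 1) - v0 else v0 + d - (y - 1)) := by
      rw [inflPerm_apply, ACL2.inflNat_mid inc _ (Nat.le_add_right _ _) (by simp; omega)]
      congr 1
      omega
    rw [h2]
    cases inc <;> simp [runv] <;> omega

end
end ACL

namespace ACL
section
variable {N d v0 : ℕ}

def collapse (p d x : ℕ) : ℕ := if x < p then x else if x ≤ p + d then p else x - d

lemma collapse_lt_collapse {p d x y : ℕ} (hxy : x < y)
    (hnot : ¬ ((p ≤ x ∧ x ≤ p + d) ∧ (p ≤ y ∧ y ≤ p + d))) :
    collapse p d x < collapse p d y := by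
  unfold collapse; split_ifs <;> omega

lemma collapse_lt_N {p d x N : ℕ} (hp : p < N) (hx : x < N + d) : collapse p d x < N := by
  unfold collapse; split_ifs <;> omega

lemma vlift_lt_iff {v0 d a b : ℕ} : vlift v0 d a < vlift v0 d b ↔ a < b := by
  unfold vlift; split_ifs <;> omega

lemma run_vs_off {v0 d w u : ℕ} (h1 : v0 ≤ w) (h2 : w ≤ v0 + d) (hu : u ≠ v0) :
    (v0 < u ↔ w < vlift v0 d u) := by
  unfold vlift; split_ifs <;> omega

/-- collapsing on values: `inflNat` value at off-run position `x` equals `vlift` of the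
collapsed σ-value. -/
lemma inflNat_off_eq {p v0 : ℕ} (inc : Bool) (s : ℕ → ℕ) {x : ℕ}
    (hx : ¬ (p ≤ x ∧ x ≤ p + d)) :
    inflNat p v0 d inc s x = vlift v0 d (s (collapse p d x)) := by
  unfold collapse
  rcases lt_or_ge x p with h | h
  · rw [ACL2.inflNat_lo inc s h, if_pos h]
  · rw [ACL2.inflNat_hi inc s (by omega), if_neg (by omega), if_neg (by omega)]

lemma collapse_off_ne_p {p d x N : ℕ} (hx : ¬ (p ≤ x ∧ x ≤ p + d)) (hp : p < N) :
    collapse p d x ≠ p := by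
  unfold collapse; split_ifs <;> omega

end
end ACL

namespace ACL
section
variable {N d v0 : ℕ}

lemma off_vs_run {v0 d w u : ℕ} (h1 : v0 ≤ w) (h2 : w ≤ v0 + d) (hu : u ≠ v0) :
    (u < v0 ↔ vlift v0 d u < w) := by
  unfold vlift; split_ifs <;> omega

lemma collapse_mid {p d x : ℕ} (h1 : p ≤ x) (h2 : x ≤ p + d) : collapse p d x = p := by
  unfold collapse; rw [if_neg (by omega), if_pos h2]

lemma sFun_val (σ : Equiv.Perm (Fin N)) {z : ℕ} (h : z < N) :
    ((σ ⟨z, h⟩ : Fin N) : ℕ) = sFun σ z := by simp [sFun, dif_pos h]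

lemma inflPerm_contains {m : ℕ} (τ : Equiv.Perm (Fin m)) (hv : v0 + 1 ≤ N) (inc : Bool)
    (σ : Equiv.Perm (Fin N))
    (hcont : Contains ⇑(inflPerm (d := d) hv inc σ) ⇑τ) :
    Contains ⇑σ ⇑τ ∨ (inc = true ∧ ContainsTightly12 τ) ∨
      (inc = false ∧ ContainsTightly21 τ) := by
  obtain ⟨f, hf, hiff⟩ := hcont
  set p := ppos hv σ with hpdef
  have hpN : p < N := ppos_lt hv σ
  have hsp : sFun σ p = v0 := sFun_ppos hv σ
  have hne : ∀ z, z < N → z ≠ p → sFun σ z ≠ v0 := fun z hz hzp hzv =>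
    hzp (sFun_inj σ z p hz hpN (by rw [hzv, hsp]))
  have hiff' : ∀ j k : Fin m,
      (inflNat p v0 d inc (sFun σ) (f j) < inflNat p v0 d inc (sFun σ) (f k)
        ↔ (τ j : ℕ) < (τ k : ℕ)) := by
    intro j k
    rw [← inflPerm_apply hv inc σ (f j), ← inflPerm_apply hv inc σ (f k),
      ← Fin.lt_def, ← Fin.lt_def]
    exact hiff j k
  by_cases hone : ∀ j k : Fin m, (p ≤ (f j : ℕ) ∧ (f j : ℕ) ≤ p + d) →
      (p ≤ (f k : ℕ) ∧ (f k : ℕ) ≤ p + d) → j = k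
  · left
    refine ⟨fun j => ⟨collapse p d (f j), collapse_lt_N hpN (f j).isLt⟩, ?_, ?_⟩
    · intro j k hjk
      have hfjk : (f j : ℕ) < (f k : ℕ) := hf hjk
      refine Fin.mk_lt_mk.mpr (collapse_lt_collapse hfjk ?_)
      rintro ⟨h1, h2⟩
      exact absurd (hone j k h1 h2) (ne_of_lt hjk)
    · intro j k
      simp only [Fin.lt_def]
      rw [sFun_val σ, sFun_val σ, ← hiff' j k]
      by_cases hj : p ≤ (f j : ℕ) ∧ (f j : ℕ) ≤ p + d <;>
        by_cases hk : p ≤ (f k : ℕ) ∧ (f k : ℕ) ≤ p + d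
      · have : j = k := hone j k hj hk
        subst this
        simp
      · rw [collapse_mid hj.1 hj.2, hsp, ACL2.inflNat_mid inc _ hj.1 hj.2,
          inflNat_off_eq inc _ hk]
        have hb := ACL2.runv_mem (v0 := v0) (d := d) inc (t := (f j : ℕ) - p) (by omega)
        exact run_vs_off hb.1 hb.2
          (hne _ (collapse_lt_N hpN (f k).isLt) (collapse_off_ne_p hk hpN))
      · rw [collapse_mid hk.1 hk.2, hsp, ACL2.inflNat_mid inc _ hk.1 hk.2,
          inflNat_off_eq inc _ hj]
        have hb := ACL2.runv_mem (v0 := v0) (d := d) inc (t := (f k : ℕ) - p) (by omega)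
        exact off_vs_run hb.1 hb.2
          (hne _ (collapse_lt_N hpN (f j).isLt) (collapse_off_ne_p hj hpN))
      · rw [inflNat_off_eq inc _ hj, inflNat_off_eq inc _ hk]
        exact vlift_lt_iff.symm
  · right
    push_neg at hone
    have key : ∀ j1 j2 : Fin m, (p ≤ (f j1 : ℕ) ∧ (f j1 : ℕ) ≤ p + d) →
        (p ≤ (f j2 : ℕ) ∧ (f j2 : ℕ) ≤ p + d) → j1 < j2 →
        (inc = true ∧ ContainsTightly12 τ) ∨ (inc = false ∧ ContainsTightly21 τ) := by
      intro j1 j2 hr1 hr2 hlt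
      have hltv : (j1 : ℕ) < (j2 : ℕ) := hlt
      have hm1 : (j1 : ℕ) + 1 < m := by have := j2.isLt; omega
      set i' : Fin m := ⟨(j1 : ℕ) + 1, hm1⟩ with hi'def
      have hival : (i' : ℕ) = (j1 : ℕ) + 1 := rfl
      have hii' : j1 < i' := by rw [Fin.lt_def]; omega
      have hi'j2 : i' ≤ j2 := by rw [Fin.le_def]; omega
      have hF1 : (f j1 : ℕ) < (f i' : ℕ) := hf hii'
      have hF2 : (f i' : ℕ) ≤ (f j2 : ℕ) := hf.monotone hi'j2
      have hr' : p ≤ (f i' : ℕ) ∧ (f i' : ℕ) ≤ p + d := ⟨by omega, by omega⟩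
      have hrw1 := ACL2.inflNat_mid (p := p) (v0 := v0) (d := d) inc (sFun σ) hr1.1 hr1.2
      have hrw' := ACL2.inflNat_mid (p := p) (v0 := v0) (d := d) inc (sFun σ) hr'.1 hr'.2
      -- the in-run criterion for a slot u
      have hinrun : ∀ u : Fin m, v0 ≤ inflNat p v0 d inc (sFun σ) (f u) →
          inflNat p v0 d inc (sFun σ) (f u) ≤ v0 + d →
          p ≤ (f u : ℕ) ∧ (f u : ℕ) ≤ p + d := by
        intro u h1 h2
        by_contra hoff
        rw [inflNat_off_eq inc _ hoff] at h1 h2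
        have hnev : sFun σ (collapse p d (f u)) ≠ v0 :=
          hne _ (collapse_lt_N hpN (f u).isLt) (collapse_off_ne_p hoff hpN)
        have := ACL2.vlift_notin (d := d) hnev
        omega
      cases inc with
      | true =>
        left
        refine ⟨rfl, j1, i', rfl, ?_⟩
        have hτlt : (τ j1 : ℕ) < (τ i' : ℕ) := by
          rw [← hiff' j1 i', hrw1, hrw']
          simp [runv]
          omega
        by_contra hq
        have hq2 : (τ j1 : ℕ) + 1 < (τ i' : ℕ) := by omega
        set u := τ.symm ⟨(τ j1 : ℕ) + 1, by have := (τ i').isLt; omega⟩ with hu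
        have hτu : (τ u : ℕ) = (τ j1 : ℕ) + 1 := by
          rw [hu, Equiv.apply_symm_apply]
        have h1 := (hiff' j1 u).mpr (by omega)
        have h2 := (hiff' u i').mpr (by omega)
        rw [hrw1] at h1
        rw [hrw'] at h2
        have hb1 := ACL2.runv_mem (v0 := v0) (d := d) true (t := (f j1 : ℕ) - p) (by omega)
        have hb' := ACL2.runv_mem (v0 := v0) (d := d) true (t := (f i' : ℕ) - p) (by omega)
        have hur := hinrun u (by omega) (by omega)
        rw [ACL2.inflNat_mid true _ hur.1 hur.2] at h1 h2
        simp [runv] at h1 h2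
        have hu1 : j1 < u := hf.lt_iff_lt.mp (by rw [Fin.lt_def]; omega)
        have hu2 : u < i' := hf.lt_iff_lt.mp (by rw [Fin.lt_def]; omega)
        rw [Fin.lt_def] at hu1 hu2
        omega
      | false =>
        right
        refine ⟨rfl, j1, i', rfl, ?_⟩
        have hτlt : (τ i' : ℕ) < (τ j1 : ℕ) := by
          rw [← hiff' i' j1, hrw1, hrw']
          simp [runv]
          omega
        by_contra hq
        have hq2 : (τ i' : ℕ) + 1 < (τ j1 : ℕ) := by omega
        set u := τ.symm ⟨(τ i' : ℕ) + 1, by have := (τ j1).isLt; omega⟩ with hu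
        have hτu : (τ u : ℕ) = (τ i' : ℕ) + 1 := by
          rw [hu, Equiv.apply_symm_apply]
        have h1 := (hiff' i' u).mpr (by omega)
        have h2 := (hiff' u j1).mpr (by omega)
        rw [hrw'] at h1
        rw [hrw1] at h2
        have hb1 := ACL2.runv_mem (v0 := v0) (d := d) false (t := (f j1 : ℕ) - p) (by omega)
        have hb' := ACL2.runv_mem (v0 := v0) (d := d) false (t := (f i' : ℕ) - p) (by omega)
        have hur := hinrun u (by omega) (by omega)
        rw [ACL2.inflNat_mid false _ hur.1 hur.2] at h1 h2
        simp [runv] at h1 h2 hb1 hb'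
        have hu1 : j1 < u := hf.lt_iff_lt.mp (by rw [Fin.lt_def]; omega)
        have hu2 : u < i' := hf.lt_iff_lt.mp (by rw [Fin.lt_def]; omega)
        rw [Fin.lt_def] at hu1 hu2
        omega
    obtain ⟨j1, k1, hj1, hk1, hne12⟩ := hone
    rcases lt_or_gt_of_ne hne12 with h | h
    · exact key j1 k1 hj1 hk1 h
    · exact key k1 j1 hk1 hj1 h

end
end ACL

namespace ACL
section
variable {N d v0 : ℕ}

lemma inflPerm_off (hv : v0 + 1 ≤ N) (inc : Bool) (σ : Equiv.Perm (Fin N)) (x : Fin N)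
    (hx : (x : ℕ) ≠ ppos hv σ) :
    (inflPerm (d := d) hv inc σ
      ⟨if (x : ℕ) < ppos hv σ then (x : ℕ) else (x : ℕ) + d,
        by have := x.isLt; split_ifs <;> omega⟩ : ℕ) = vlift v0 d (sFun σ x) := by
  have hpN := ppos_lt hv σ
  rw [inflPerm_apply]
  rcases lt_or_ge (x : ℕ) (ppos hv σ) with h | h
  · simp only [if_pos h]
    rw [ACL2.inflNat_lo inc _ h]
  · simp only [if_neg (by omega : ¬ (x : ℕ) < ppos hv σ)]
    rw [ACL2.inflNat_hi inc _ (by omega)]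
    simp

lemma inflPerm_pos_val (hv : v0 + 1 ≤ N) (inc : Bool) (σ : Equiv.Perm (Fin N)) {t : ℕ}
    (ht : t ≤ d) :
    (inflPerm (d := d) hv inc σ
      ⟨ppos hv σ + t, by have := ppos_lt hv σ; omega⟩ : ℕ) = runv v0 d inc t := by
  rw [inflPerm_apply, ACL2.inflNat_mid inc _ (Nat.le_add_right _ _) (by omega)]
  congr 1
  omega

lemma inflPerm_inj {σ σ' : Equiv.Perm (Fin N)} (hv : v0 + 1 ≤ N) (inc : Bool)
    (h : inflPerm (d := d) hv inc σ = inflPerm (d := d) hv inc σ') : σ = σ' := by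
  have hpN := ppos_lt hv σ
  have hp'N := ppos_lt hv σ'
  -- positions of value v0 agree
  have hpq : ppos hv σ = ppos hv σ' := by
    have e1 := inflPerm_pos_val (d := d) hv inc σ (t := if inc then 0 else d)
      (by split_ifs <;> omega)
    have e2 := inflPerm_pos_val (d := d) hv inc σ' (t := if inc then 0 else d)
      (by split_ifs <;> omega)
    rw [h] at e1
    have hrv : runv v0 d inc (if inc then 0 else d) = v0 := by cases inc <;> simp [runv]
    rw [hrv] at e1 e2
    have := (inflPerm (d := d) hv inc σ').injective
      (Fin.ext (e1.trans e2.symm) :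
        inflPerm (d := d) hv inc σ' ⟨ppos hv σ + _, _⟩ =
          inflPerm (d := d) hv inc σ' ⟨ppos hv σ' + _, _⟩)
    have := congrArg Fin.val this
    simpa using this
  refine Equiv.ext fun x => Fin.ext ?_
  have hsx : ((σ x : Fin N) : ℕ) = sFun σ (x : ℕ) := by
    simp [sFun, dif_pos x.isLt]
  have hsx' : ((σ' x : Fin N) : ℕ) = sFun σ' (x : ℕ) := by
    simp [sFun, dif_pos x.isLt]
  rcases eq_or_ne (x : ℕ) (ppos hv σ) with hx | hx
  · have h1 : sFun σ (x : ℕ) = v0 := by rw [hx]; exact sFun_ppos hv σ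
    have h2 : sFun σ' (x : ℕ) = v0 := by rw [hx, hpq]; exact sFun_ppos hv σ'
    rw [hsx, hsx', h1, h2]
  · have hx' : (x : ℕ) ≠ ppos hv σ' := by rw [← hpq]; exact hx
    have e1 := inflPerm_off (d := d) hv inc σ x hx
    have e2 := inflPerm_off (d := d) hv inc σ' x hx'
    rw [← hpq] at e2
    rw [h] at e1
    rw [hsx, hsx']
    exact ACL2.vlift_eq_iff (e1.symm.trans e2 : _)

lemma inflPerm_ne (hd : 1 ≤ d) (hv : v0 + 1 ≤ N) (σ σ' : Equiv.Perm (Fin N)) :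
    inflPerm (d := d) hv true σ ≠ inflPerm (d := d) hv false σ' := by
  intro h
  have hpN := ppos_lt hv σ
  have hp'N := ppos_lt hv σ'
  have e1 := inflPerm_pos_val (d := d) hv true σ (t := 0) (by omega)
  have e2 := inflPerm_pos_val (d := d) hv true σ (t := 1) hd
  have e3 := inflPerm_pos_val (d := d) hv false σ' (t := d) le_rfl
  have e4 := inflPerm_pos_val (d := d) hv false σ' (t := d - 1) (by omega)
  rw [h] at e1 e2
  simp [runv] at e1 e2 e3 e4
  rw [show v0 + d - (d - 1) = v0 + 1 by omega] at e4
  have q1 := (inflPerm (d := d) hv false σ').injective (Fin.ext (e1.trans e3.symm))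
  have q2 := (inflPerm (d := d) hv false σ').injective (Fin.ext (e2.trans e4.symm))
  have q1' := congrArg Fin.val q1
  have q2' := congrArg Fin.val q2
  simp at q1' q2'
  omega

end
end ACL

namespace ACL
section
variable {N d v0 : ℕ}

lemma inflPerm_mem {m : ℕ} (τ : Equiv.Perm (Fin m)) (hd : 1 ≤ d) (hv : v0 + 1 ≤ N) (inc : Bool)
    (htight : (inc = true → ¬ ContainsTightly12 τ) ∧ (inc = false → ¬ ContainsTightly21 τ))
    (σ : Equiv.Perm (Fin N)) (hσ : σ ∈ AvoidSet N τ) :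
    inflPerm (d := d) hv inc σ ∈
      ClusterEvent (N + d) (d + 1) (v0 + 1) ∩ AvoidSet (N + d) τ := by
  have hpN := ppos_lt hv σ
  constructor
  · exact ⟨ppos hv σ + 1, by omega, by omega, inflPerm_cluster hv inc σ⟩
  · intro hcont
    rcases inflPerm_contains τ hv inc σ hcont with h | ⟨hi, h⟩ | ⟨hi, h⟩
    · exact hσ h
    · exact htight.1 hi h
    · exact htight.2 hi h

lemma ncard_le_one {m : ℕ} (τ : Equiv.Perm (Fin m)) (hd : 1 ≤ d) (hv : v0 + 1 ≤ N) (inc : Bool)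
    (htight : (inc = true → ¬ ContainsTightly12 τ) ∧ (inc = false → ¬ ContainsTightly21 τ)) :
    (AvoidSet N τ).ncard ≤
      ((ClusterEvent (N + d) (d + 1) (v0 + 1) ∩ AvoidSet (N + d) τ)).ncard :=
  Set.ncard_le_ncard_of_injOn (inflPerm (d := d) hv inc)
    (fun σ hσ => inflPerm_mem τ hd hv inc htight σ hσ)
    (fun _ _ _ _ h => inflPerm_inj hv inc h) (Set.toFinite _)

lemma ncard_le_two {m : ℕ} (τ : Equiv.Perm (Fin m)) (hd : 1 ≤ d) (hv : v0 + 1 ≤ N)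
    (h12 : ¬ ContainsTightly12 τ) (h21 : ¬ ContainsTightly21 τ) :
    2 * (AvoidSet N τ).ncard ≤
      ((ClusterEvent (N + d) (d + 1) (v0 + 1) ∩ AvoidSet (N + d) τ)).ncard := by
  set S := AvoidSet N τ with hS
  set T := ClusterEvent (N + d) (d + 1) (v0 + 1) ∩ AvoidSet (N + d) τ with hT
  have hA : (inflPerm (d := d) hv true) '' S ⊆ T := by
    rintro x ⟨σ, hσ, rfl⟩
    exact inflPerm_mem τ hd hv true ⟨fun _ => h12, fun h => by simp at h⟩ σ hσ
  have hB : (inflPerm (d := d) hv false) '' S ⊆ T := by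
    rintro x ⟨σ, hσ, rfl⟩
    exact inflPerm_mem τ hd hv false ⟨fun h => by simp at h, fun _ => h21⟩ σ hσ
  have hdisj : Disjoint ((inflPerm (d := d) hv true) '' S) ((inflPerm (d := d) hv false) '' S) := by
    rw [Set.disjoint_left]
    rintro x ⟨σ, hσ, rfl⟩ ⟨σ', hσ', hx⟩
    exact inflPerm_ne hd hv σ σ' hx.symm
  calc 2 * S.ncard = ((inflPerm (d := d) hv true) '' S).ncard
        + ((inflPerm (d := d) hv false) '' S).ncard := by
        rw [Set.ncard_image_of_injOn (fun _ _ _ _ h => inflPerm_inj hv true h),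
          Set.ncard_image_of_injOn (fun _ _ _ _ h => inflPerm_inj hv false h)]
        ring
    _ = (((inflPerm (d := d) hv true) '' S) ∪ ((inflPerm (d := d) hv false) '' S)).ncard :=
        (Set.ncard_union_eq hdisj (Set.toFinite _) (Set.toFinite _)).symm
    _ ≤ T.ncard := Set.ncard_le_ncard (Set.union_subset hA hB) (Set.toFinite _)

end
end ACL

/-- liminf lower bounds `1/L^{l-1}` and `2/L^{l-1}` under the tight-containment
hypotheses. -/
theorem avoid_cluster_liminf_lower (m : ℕ) (hm : 2 ≤ m) (τ : Equiv.Perm (Fin m))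
    (L : ℝ) (hL : 0 < L)
    (hconv : Filter.Tendsto
      (fun n : ℕ => ((AvoidSet (n + 1) τ).ncard : ℝ) / ((AvoidSet n τ).ncard : ℝ))
      Filter.atTop (nhds L))
    (l : ℕ) (hl : 2 ≤ l) (k : ℕ → ℕ) (hk : ∀ n : ℕ, 1 ≤ k n ∧ k n ≤ n - l + 1) :
    ((¬ ContainsTightly12 τ ∨ ¬ ContainsTightly21 τ) →
      1 / L ^ (l - 1) ≤
        Filter.liminf
          (fun n : ℕ => ((ClusterEvent n l (k n) ∩ AvoidSet n τ).ncard : ℝ) /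
            ((AvoidSet n τ).ncard : ℝ)) Filter.atTop) ∧
    ((¬ ContainsTightly12 τ ∧ ¬ ContainsTightly21 τ) →
      2 / L ^ (l - 1) ≤
        Filter.liminf
          (fun n : ℕ => ((ClusterEvent n l (k n) ∩ AvoidSet n τ).ncard : ℝ) /
            ((AvoidSet n τ).ncard : ℝ)) Filter.atTop) := by
  set d := l - 1 with hddef
  have hd1 : 1 ≤ d := by omega
  have hld : l = d + 1 := by omega
  set cnt : ℕ → ℝ := fun n => ((AvoidSet n τ).ncard : ℝ) with hcnt
  set ratio : ℕ → ℝ := fun n : ℕ => ((ClusterEvent n l (k n) ∩ AvoidSet n τ).ncard : ℝ) /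
    cnt n with hratio
  -- eventual positivity of the counts
  have hpos : ∀ᶠ n in Filter.atTop, 0 < cnt n := by
    have h1 : ∀ᶠ n in Filter.atTop, L / 2 < cnt (n + 1) / cnt n :=
      hconv.eventually (eventually_gt_nhds (by linarith))
    obtain ⟨n0, hn0⟩ := Filter.eventually_atTop.mp h1
    refine Filter.eventually_atTop.mpr ⟨n0 + 1, fun n hn => ?_⟩
    have h2 := hn0 (n - 1) (by omega)
    have hrw : n - 1 + 1 = n := by omega
    rw [hrw] at h2
    rcases (Nat.cast_nonneg _ : (0 : ℝ) ≤ cnt n).lt_or_eq with h | h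
    · exact h
    · have h' : cnt n = 0 := h.symm
      rw [h', zero_div] at h2; linarith
  obtain ⟨n0, hn0⟩ := Filter.eventually_atTop.mp hpos
  -- ratio of counts over gap j tends to L^j
  have hstep : ∀ j : ℕ, Filter.Tendsto (fun n => cnt (n + j) / cnt n)
      Filter.atTop (nhds (L ^ j)) := by
    intro j
    induction j with
    | zero =>
      rw [pow_zero]
      apply Filter.Tendsto.congr' _ (tendsto_const_nhds (x := (1 : ℝ)))
      filter_upwards [Filter.eventually_atTop.mpr ⟨n0, fun n hn => hn0 n hn⟩] with n hn
      rw [Nat.add_zero, div_self hn.ne']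
    | succ j ih =>
      have h1 : Filter.Tendsto (fun n => cnt (n + j + 1) / cnt (n + j))
          Filter.atTop (nhds L) := hconv.comp (tendsto_add_atTop_nat j)
      have h2 := h1.mul ih
      rw [pow_succ, mul_comm]
      apply Filter.Tendsto.congr' _ h2
      filter_upwards [Filter.eventually_atTop.mpr ⟨n0, fun n hn => hn0 n hn⟩,
        Filter.eventually_atTop.mpr ⟨n0, fun n (hn : n0 ≤ n) => hn0 (n + j) (by omega)⟩]
        with n hn hnj
      field_simp
      ring
  -- the inverse-gap ratio
  have hlow : Filter.Tendsto (fun n => cnt (n - d) / cnt n)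
      Filter.atTop (nhds ((L ^ d)⁻¹)) := by
    have h1 : Filter.Tendsto (fun n => cnt n / cnt (n - d)) Filter.atTop (nhds (L ^ d)) := by
      have h2 := (hstep d).comp (tendsto_sub_atTop_nat d)
      apply Filter.Tendsto.congr' _ h2
      filter_upwards [Filter.eventually_atTop.mpr ⟨d, fun n (hn : d ≤ n) => hn⟩] with n hn
      simp only [Function.comp_apply]
      rw [Nat.sub_add_cancel hn]
    have h3 := h1.inv₀ (pow_ne_zero _ hL.ne')
    exact h3.congr (fun n => by rw [inv_div])
  -- the main counting estimate, parametrized by the constant c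
  have hmain : ∀ (c : ℝ), 0 < c →
      (∀ (N : ℕ), (k (N + d) - 1 + 1 ≤ N) →
        c * ((AvoidSet N τ).ncard : ℝ) ≤
          (((ClusterEvent (N + d) (d + 1) ((k (N + d) - 1) + 1) ∩
            AvoidSet (N + d) τ)).ncard : ℝ)) →
      c / L ^ d ≤ Filter.liminf ratio Filter.atTop := by
    intro c hc hcard
    have hb : ∀ᶠ n in Filter.atTop, c * (cnt (n - d) / cnt n) ≤ ratio n := by
      filter_upwards [Filter.eventually_atTop.mpr ⟨l + n0, fun n (hn : l + n0 ≤ n) => hn⟩,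
        hpos] with n hn hposn
      have hkn := hk n
      have hNd : n - d + d = n := by omega
      have hv : k (n - d + d) - 1 + 1 ≤ n - d := by rw [hNd]; omega
      have h4 := hcard (n - d) hv
      rw [hNd, show k n - 1 + 1 = k n from by omega, ← hld] at h4
      have hr : ratio n = ((ClusterEvent n l (k n) ∩ AvoidSet n τ).ncard : ℝ) / cnt n := rfl
      rw [hr, ← mul_div_assoc]
      exact (div_le_div_iff_of_pos_right hposn).mpr h4
    have hclow := hlow.const_mul c
    have heq : Filter.liminf (fun n => c * (cnt (n - d) / cnt n)) Filter.atTop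
        = c * (L ^ d)⁻¹ := hclow.liminf_eq
    have hub : ∀ n, ratio n ≤ 1 := fun n => by
      have hle : ((ClusterEvent n l (k n) ∩ AvoidSet n τ).ncard : ℝ) ≤ cnt n := by
        exact_mod_cast Nat.cast_le.mpr
          (Set.ncard_le_ncard Set.inter_subset_right (Set.toFinite _))
      exact div_le_one_of_le₀ hle (Nat.cast_nonneg _)
    have hcb : Filter.IsCoboundedUnder (· ≥ ·) Filter.atTop ratio :=
      Filter.isCoboundedUnder_ge_of_eventually_le Filter.atTop
        (Filter.Eventually.of_forall hub)
    have hbd : Filter.IsBoundedUnder (· ≥ ·) Filter.atTop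
        (fun n => c * (cnt (n - d) / cnt n)) := hclow.isBoundedUnder_ge
    have hle := Filter.liminf_le_liminf hb hbd hcb
    rw [heq] at hle
    calc c / L ^ d = c * (L ^ d)⁻¹ := div_eq_mul_inv _ _
      _ ≤ _ := hle
  constructor
  · intro hor
    rcases hor with h12 | h21
    · refine hmain 1 one_pos (fun N hv => ?_)
      have h5 := ACL.ncard_le_one (d := d) (v0 := k (N + d) - 1) τ hd1 hv true
        ⟨fun _ => h12, fun h => by simp at h⟩
      rw [one_mul]
      exact_mod_cast h5
    · refine hmain 1 one_pos (fun N hv => ?_)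
      have h5 := ACL.ncard_le_one (d := d) (v0 := k (N + d) - 1) τ hd1 hv false
        ⟨fun h => by simp at h, fun _ => h21⟩
      rw [one_mul]
      exact_mod_cast h5
  · rintro ⟨h12, h21⟩
    refine hmain 2 two_pos (fun N hv => ?_)
    have h5 := ACL.ncard_le_two (d := d) (v0 := k (N + d) - 1) τ hd1 hv h12 h21
    exact_mod_cast h5
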